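/- Let $H \in (1/2,1)$, $T > 0$, $\sigma \neq 0$, $M \geqslant 0$, and let $g_1,\dots,g_N : [0,T] \to \mathbb{R}$ be continuous functions with $-M \leqslant g_i(u) \leqslant 0$ for all $u$ and $i$. Let $D > 0$, $I \in \mathbb{R}$, $\alpha_H = H(2H-1)$, $\overline\alpha_H = \frac{\alpha_H}{2H(2H+1)}$, and define $\Phi : \mathbb{R}_+ \to \mathbb{R}$ by $\Phi(r) = -\frac{\alpha_H\sigma^2}{NTD}\sum_{i=1}^N \int_0^T \int_0^t g_i(t)\exp\left[(r+I)\int_s^t g_i(u)\,du\right](t-s)^{2H-2}\,ds\,dt$. If $T^{2H}\frac{e^{M|I|T}}{D} \leqslant \frac{\mathfrak{c}}{\overline\alpha_H \sigma^2 M^2}$ for some $\mathfrak{c} \in (0,1)$, then $\Phi$ maps $\mathbb{R}_+$ into $\mathbb{R}_+$ and is a $\mathfrak{c}$-Lipschitz contraction on $\mathbb{R}_+$; hence $\Phi$ has a unique fixed point in $\mathbb{R}_+$. -/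

import Mathlib

set_option maxHeartbeats 2000000

open MeasureTheory Set intervalIntegral

private lemma my_integral_nonpos {f : ℝ → ℝ} {a b : ℝ} (hab : a ≤ b)
    (h : ∀ x ∈ Set.Icc a b, f x ≤ 0) : (∫ x in a..b, f x) ≤ 0 := by
  have h0 : (0:ℝ) ≤ ∫ x in a..b, -f x :=
    intervalIntegral.integral_nonneg hab fun u hu => neg_nonneg.2 (h u hu)
  rw [intervalIntegral.integral_neg] at h0
  linarith

private lemma my_abs_exp_sub_exp {x y : ℝ} (hx : x ≤ 0) (hy : y ≤ 0) :
    |Real.exp x - Real.exp y| ≤ |x - y| := by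
  have key : ∀ a b : ℝ, a ≤ 0 → b ≤ 0 → b ≤ a → Real.exp a - Real.exp b ≤ a - b := by
    intro a b ha hb hba
    have h1 : Real.exp a ≤ 1 := Real.exp_le_one_iff.2 ha
    have h2 : (b - a) + 1 ≤ Real.exp (b - a) := Real.add_one_le_exp _
    have h3 : Real.exp a * Real.exp (b - a) = Real.exp b := by
      rw [← Real.exp_add]; congr 1; ring
    nlinarith [Real.exp_pos a, Real.exp_pos (b - a),
      mul_le_mul_of_nonneg_left h2 (Real.exp_pos a).le,
      mul_le_mul_of_nonneg_right h1 (sub_nonneg.2 hba)]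
  rcases le_total y x with h | h
  · rw [abs_of_nonneg (sub_nonneg.2 (Real.exp_le_exp.2 h)), abs_of_nonneg (sub_nonneg.2 h)]
    exact key x y hx hy h
  · rw [abs_of_nonpos (sub_nonpos.2 (Real.exp_le_exp.2 h)), abs_of_nonpos (sub_nonpos.2 h)]
    have := key y x hy hx h; linarith

private lemma my_integral_rpow_sub (t e : ℝ) (hq : (-1:ℝ) < e) :
    (∫ s in (0:ℝ)..t, (t - s) ^ e) = t ^ (e + 1) / (e + 1) := by
  have h := intervalIntegral.integral_comp_sub_left (a := 0) (b := t) (fun x : ℝ => x ^ e) t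
  simp only [sub_self, sub_zero] at h
  rw [h, integral_rpow (Or.inl hq), Real.zero_rpow (by linarith), sub_zero]

theorem fixed_point_existence_uniqueness
    (H T σ M D I c : ℝ) (N : ℕ) (hN : 1 ≤ N)
    (hH1 : 1 / 2 < H) (hH2 : H < 1) (hT : 0 < T) (hσ : σ ≠ 0) (hM : 0 ≤ M)
    (hD : 0 < D) (hc : 0 < c) (hc1 : c < 1)
    (g : Fin N → ℝ → ℝ) (hgcont : ∀ i, Continuous (g i))
    (hg : ∀ i, ∀ u, -M ≤ g i u ∧ g i u ≤ 0)
    (αH ᾱH : ℝ) (hα : αH = H * (2 * H - 1)) (hᾱ : ᾱH = αH / (2 * H * (2 * H + 1)))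
    (Φ : ℝ → ℝ)
    (hΦ : ∀ r, Φ r = -(αH * σ ^ 2 / (N * T * D)) *
      ∑ i, ∫ t in (0:ℝ)..T, ∫ s in (0:ℝ)..t,
        g i t * Real.exp ((r + I) * ∫ u in s..t, g i u) * (t - s) ^ (2 * H - 2))
    (hcond : T ^ (2 * H) * Real.exp (M * |I| * T) / D ≤ c / (ᾱH * σ ^ 2 * M ^ 2)) :
    (∀ r, 0 ≤ r → 0 ≤ Φ r) ∧
      (∀ r ρ, 0 ≤ r → 0 ≤ ρ → |Φ r - Φ ρ| ≤ c * |r - ρ|) ∧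
        (∃! R : ℝ, 0 ≤ R ∧ Φ R = R) := by
  have hH0 : (0:ℝ) < H := by linarith
  have h2H1 : (0:ℝ) < 2 * H - 1 := by linarith
  have h2H : (0:ℝ) < 2 * H := by linarith
  have h2H1' : (0:ℝ) < 2 * H + 1 := by linarith
  have hαpos : 0 < αH := by rw [hα]; nlinarith
  have hᾱpos : 0 < ᾱH := by rw [hᾱ]; exact div_pos hαpos (by nlinarith)
  have hσ2 : 0 < σ ^ 2 := by positivity
  have hNpos : (0:ℝ) < (N:ℝ) := by exact_mod_cast Nat.lt_of_lt_of_le Nat.zero_lt_one hN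
  have hMpos : 0 < M := by
    rcases hM.lt_or_eq with h | h
    · exact h
    exfalso
    have hP : ᾱH * σ ^ 2 * M ^ 2 = 0 := by rw [← h]; ring
    rw [hP, div_zero] at hcond
    have hpos : 0 < T ^ (2 * H) * Real.exp (M * |I| * T) / D := by positivity
    linarith
  set E := Real.exp (M * |I| * T) with hE
  have hEpos : 0 < E := Real.exp_pos _
  -- sign and size of the inner integral of g
  have hJ : ∀ (i : Fin N) (s t : ℝ), s ≤ t →
      (∫ u in s..t, g i u) ≤ 0 ∧ -(M * (t - s)) ≤ ∫ u in s..t, g i u := by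
    intro i s t hst
    constructor
    · exact my_integral_nonpos hst fun u _ => (hg i u).2
    · have h := intervalIntegral.integral_mono_on (μ := volume) (f := fun _ => -M) (g := g i)
        hst intervalIntegrable_const ((hgcont i).intervalIntegrable s t) (fun u _ => (hg i u).1)
      rw [intervalIntegral.integral_const, smul_eq_mul] at h
      nlinarith [h]
  have habsJ : ∀ (i : Fin N) (s t : ℝ), s ≤ t → |∫ u in s..t, g i u| ≤ M * (t - s) := by
    intro i s t hst
    obtain ⟨h1, h2⟩ := hJ i s t hst
    have hnn : 0 ≤ M * (t - s) := mul_nonneg hMpos.le (sub_nonneg.2 hst)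
    rw [abs_le]; exact ⟨by linarith, by linarith⟩
  -- bound on the exponential factor
  have hexp_bound : ∀ (i : Fin N) (r : ℝ), 0 ≤ r → ∀ s t : ℝ, 0 ≤ s → s ≤ t → t ≤ T →
      Real.exp ((r + I) * ∫ u in s..t, g i u) ≤ E := by
    intro i r hr s t hs hst htT
    obtain ⟨hJ0, _⟩ := hJ i s t hst
    have hJa := habsJ i s t hst
    apply Real.exp_le_exp.2
    have h1 : r * (∫ u in s..t, g i u) ≤ 0 := mul_nonpos_iff.2 (Or.inl ⟨hr, hJ0⟩)
    have h2 : I * (∫ u in s..t, g i u) ≤ |I| * (M * (t - s)) := by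
      calc I * (∫ u in s..t, g i u) ≤ |I * ∫ u in s..t, g i u| := le_abs_self _
        _ = |I| * |∫ u in s..t, g i u| := abs_mul _ _
        _ ≤ |I| * (M * (t - s)) := mul_le_mul_of_nonneg_left hJa (abs_nonneg I)
    have h3 : |I| * (M * (t - s)) ≤ |I| * (M * T) := by
      apply mul_le_mul_of_nonneg_left _ (abs_nonneg I)
      nlinarith
    nlinarith [h1, h2, h3]
  have hgabs : ∀ (i : Fin N) (t : ℝ), |g i t| ≤ M :=
    fun i t => abs_le.2 ⟨(hg i t).1, (hg i t).2.trans hMpos.le⟩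
  -- pointwise absolute bound on the integrand
  have habsf : ∀ (i : Fin N) (r : ℝ), 0 ≤ r → ∀ t s : ℝ, 0 ≤ s → s ≤ t → t ≤ T →
      |g i t * Real.exp ((r + I) * ∫ u in s..t, g i u) * (t - s) ^ (2 * H - 2)| ≤
        M * E * (t - s) ^ (2 * H - 2) := by
    intro i r hr t s hs hst htT
    rw [abs_mul, abs_mul, abs_of_pos (Real.exp_pos _),
      abs_of_nonneg (Real.rpow_nonneg (sub_nonneg.2 hst) _)]
    apply mul_le_mul_of_nonneg_right _ (Real.rpow_nonneg (sub_nonneg.2 hst) _)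
    exact mul_le_mul (hgabs i t) (hexp_bound i r hr s t hs hst htT) (Real.exp_pos _).le hMpos.le
  -- integrability of (t - s) ^ e in s
  have hrpI : ∀ (t e : ℝ), (-1:ℝ) < e →
      IntervalIntegrable (fun s => (t - s) ^ e) volume 0 t := by
    intro t e he
    have h := (intervalIntegrable_rpow' (a := t) (b := 0) he).comp_sub_left t
    simpa using h
  -- inner integrability
  have hfint : ∀ (i : Fin N) (r t : ℝ),
      IntervalIntegrable (fun s => g i t * Real.exp ((r + I) * ∫ u in s..t, g i u) *
        (t - s) ^ (2 * H - 2)) volume 0 t := by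
    intro i r t
    apply (hrpI t _ (by linarith)).continuousOn_mul
    apply Continuous.continuousOn
    have hGi : Continuous fun x : ℝ => ∫ u in (0:ℝ)..x, g i u :=
      intervalIntegral.continuous_primitive (fun a b => (hgcont i).intervalIntegrable a b) 0
    have hIeq : (fun s : ℝ => ∫ u in s..t, g i u) =
        fun s => (∫ u in (0:ℝ)..t, g i u) - ∫ u in (0:ℝ)..s, g i u := by
      funext s
      rw [intervalIntegral.integral_interval_sub_left ((hgcont i).intervalIntegrable 0 t)
        ((hgcont i).intervalIntegrable 0 s)]
    have hIcont : Continuous (fun s : ℝ => ∫ u in s..t, g i u) := by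
      rw [hIeq]; exact continuous_const.sub hGi
    exact continuous_const.mul (Real.continuous_exp.comp (continuous_const.mul hIcont))
  -- outer integrability
  have houter : ∀ (i : Fin N) (r : ℝ), 0 ≤ r →
      IntervalIntegrable (fun t => ∫ s in (0:ℝ)..t,
        g i t * Real.exp ((r + I) * ∫ u in s..t, g i u) * (t - s) ^ (2 * H - 2)) volume 0 T := by
    intro i r hr
    have hGi : Continuous fun x : ℝ => ∫ u in (0:ℝ)..x, g i u :=
      intervalIntegral.continuous_primitive (fun a b => (hgcont i).intervalIntegrable a b) 0
    have hsubGi : ∀ s t : ℝ, (∫ u in s..t, g i u) =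
        (∫ u in (0:ℝ)..t, g i u) - ∫ u in (0:ℝ)..s, g i u := by
      intro s t
      rw [intervalIntegral.integral_interval_sub_left ((hgcont i).intervalIntegrable 0 t)
        ((hgcont i).intervalIntegrable 0 s)]
    have hFFmeas : Measurable (fun p : ℝ × ℝ =>
        Set.indicator {z : ℝ × ℝ | 0 < z.2 ∧ z.2 < z.1}
          (fun z => g i z.1 * Real.exp ((r + I) *
              ((∫ u in (0:ℝ)..z.1, g i u) - ∫ u in (0:ℝ)..z.2, g i u)) *
            Real.exp (Real.log (z.1 - z.2) * (2 * H - 2))) p) := by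
      apply Measurable.indicator
      · apply Measurable.mul
        · apply Measurable.mul
          · exact ((hgcont i).comp continuous_fst).measurable
          · exact (Real.continuous_exp.comp (continuous_const.mul
              ((hGi.comp continuous_fst).sub (hGi.comp continuous_snd)))).measurable
        · exact Real.measurable_exp.comp
            ((Real.measurable_log.comp ((continuous_fst.sub continuous_snd).measurable)).mul_const _)
      · exact (measurableSet_lt measurable_const measurable_snd).inter
          (measurableSet_lt measurable_snd measurable_fst)
    have hSM : StronglyMeasurable (fun t : ℝ => ∫ s,
        Set.indicator {z : ℝ × ℝ | 0 < z.2 ∧ z.2 < z.1}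
          (fun z => g i z.1 * Real.exp ((r + I) *
              ((∫ u in (0:ℝ)..z.1, g i u) - ∫ u in (0:ℝ)..z.2, g i u)) *
            Real.exp (Real.log (z.1 - z.2) * (2 * H - 2))) (t, s)) :=
      hFFmeas.stronglyMeasurable.integral_prod_right'
    have hFeq : ∀ t : ℝ, 0 ≤ t →
        (∫ s in (0:ℝ)..t, g i t * Real.exp ((r + I) * ∫ u in s..t, g i u) *
          (t - s) ^ (2 * H - 2)) = ∫ s,
        Set.indicator {z : ℝ × ℝ | 0 < z.2 ∧ z.2 < z.1}
          (fun z => g i z.1 * Real.exp ((r + I) *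
              ((∫ u in (0:ℝ)..z.1, g i u) - ∫ u in (0:ℝ)..z.2, g i u)) *
            Real.exp (Real.log (z.1 - z.2) * (2 * H - 2))) (t, s) := by
      intro t ht
      rw [intervalIntegral.integral_of_le ht, MeasureTheory.integral_Ioc_eq_integral_Ioo,
        ← MeasureTheory.integral_indicator measurableSet_Ioo]
      congr 1
      funext s
      by_cases hs : s ∈ Set.Ioo (0:ℝ) t
      · rw [Set.indicator_of_mem hs]
        have hmem : ((t, s) : ℝ × ℝ) ∈ {z : ℝ × ℝ | 0 < z.2 ∧ z.2 < z.1} := ⟨hs.1, hs.2⟩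
        rw [Set.indicator_of_mem hmem]
        rw [hsubGi s t, Real.rpow_def_of_pos (sub_pos.2 hs.2)]
      · rw [Set.indicator_of_notMem hs, Set.indicator_of_notMem]
        intro hmem
        exact hs ⟨hmem.1, hmem.2⟩
    have hT' : Set.uIoc (0:ℝ) T = Set.Ioc 0 T := Set.uIoc_of_le hT.le
    have hTrp : (0:ℝ) ≤ T ^ (2 * H - 1) := Real.rpow_nonneg hT.le _
    have hBnn : (0:ℝ) ≤ M * E * (T ^ (2 * H - 1) / (2 * H - 1)) := by positivity
    apply IntervalIntegrable.mono_fun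
      (intervalIntegrable_const (c := M * E * (T ^ (2 * H - 1) / (2 * H - 1))))
    · rw [hT']
      apply ((hSM.aestronglyMeasurable).restrict).congr
      exact (ae_restrict_mem measurableSet_Ioc).mono fun t ht => (hFeq t ht.1.le).symm
    · rw [hT']
      refine (ae_restrict_mem measurableSet_Ioc).mono fun t ht => ?_
      have h0t : 0 ≤ t := ht.1.le
      have htT : t ≤ T := ht.2
      have hstep : |∫ s in (0:ℝ)..t, g i t * Real.exp ((r + I) * ∫ u in s..t, g i u) *
          (t - s) ^ (2 * H - 2)| ≤ M * E * (t ^ (2 * H - 1) / (2 * H - 1)) := by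
        calc |∫ s in (0:ℝ)..t, g i t * Real.exp ((r + I) * ∫ u in s..t, g i u) *
            (t - s) ^ (2 * H - 2)|
            ≤ ∫ s in (0:ℝ)..t, |g i t * Real.exp ((r + I) * ∫ u in s..t, g i u) *
              (t - s) ^ (2 * H - 2)| := intervalIntegral.abs_integral_le_integral_abs h0t
          _ ≤ ∫ s in (0:ℝ)..t, M * E * (t - s) ^ (2 * H - 2) := by
              apply intervalIntegral.integral_mono_on h0t (hfint i r t).abs
                ((hrpI t _ (by linarith)).const_mul _)
              exact fun s hs => habsf i r hr t s hs.1 hs.2 htT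
          _ = M * E * ∫ s in (0:ℝ)..t, (t - s) ^ (2 * H - 2) :=
              intervalIntegral.integral_const_mul _ _
          _ = M * E * (t ^ (2 * H - 1) / (2 * H - 1)) := by
              rw [my_integral_rpow_sub t _ (by linarith),
                show 2 * H - 2 + 1 = 2 * H - 1 by ring]
      simp only [Real.norm_eq_abs]
      rw [abs_of_nonneg hBnn]
      refine hstep.trans ?_
      have hmono : t ^ (2 * H - 1) ≤ T ^ (2 * H - 1) :=
        Real.rpow_le_rpow h0t htT (by linarith)
      gcongr
  -- pointwise Lipschitz bound on the integrand
  have hptw : ∀ (i : Fin N) (r ρ : ℝ), 0 ≤ r → 0 ≤ ρ → ∀ t s : ℝ, 0 ≤ s → s ≤ t → t ≤ T →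
      |g i t * Real.exp ((r + I) * ∫ u in s..t, g i u) * (t - s) ^ (2 * H - 2) -
        g i t * Real.exp ((ρ + I) * ∫ u in s..t, g i u) * (t - s) ^ (2 * H - 2)| ≤
      M ^ 2 * E * |r - ρ| * (t - s) ^ (2 * H - 1) := by
    intro i r ρ hr hρ t s hs hst htT
    obtain ⟨hJ0, hJM⟩ := hJ i s t hst
    have hJa := habsJ i s t hst
    have hts : 0 ≤ t - s := sub_nonneg.2 hst
    set J := ∫ u in s..t, g i u with hJdef
    have key : |Real.exp ((r + I) * J) - Real.exp ((ρ + I) * J)| ≤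
        E * (M * (t - s)) * |r - ρ| := by
      have e1 : (r + I) * J = I * J + r * J := by ring
      have e2 : (ρ + I) * J = I * J + ρ * J := by ring
      rw [e1, e2, Real.exp_add, Real.exp_add, ← mul_sub, abs_mul,
        abs_of_pos (Real.exp_pos _)]
      have h1 : |Real.exp (r * J) - Real.exp (ρ * J)| ≤ |r * J - ρ * J| :=
        my_abs_exp_sub_exp (mul_nonpos_iff.2 (Or.inl ⟨hr, hJ0⟩))
          (mul_nonpos_iff.2 (Or.inl ⟨hρ, hJ0⟩))
      have h2 : |r * J - ρ * J| = |J| * |r - ρ| := by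
        rw [show r * J - ρ * J = J * (r - ρ) by ring, abs_mul]
      have h3 : Real.exp (I * J) ≤ E := by
        apply Real.exp_le_exp.2
        calc I * J ≤ |I * J| := le_abs_self _
          _ = |I| * |J| := abs_mul _ _
          _ ≤ |I| * (M * (t - s)) := mul_le_mul_of_nonneg_left hJa (abs_nonneg I)
          _ ≤ M * |I| * T := by
              nlinarith [mul_nonneg (mul_nonneg hMpos.le (abs_nonneg I))
                (by linarith : (0:ℝ) ≤ T - (t - s))]
      calc Real.exp (I * J) * |Real.exp (r * J) - Real.exp (ρ * J)|
          ≤ E * (|J| * |r - ρ|) := by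
            apply mul_le_mul h3 (h1.trans_eq h2) (abs_nonneg _) hEpos.le
        _ ≤ E * (M * (t - s)) * |r - ρ| := by
            have h4 := mul_le_mul_of_nonneg_right
              (mul_le_mul_of_nonneg_left hJa hEpos.le) (abs_nonneg (r - ρ))
            nlinarith [h4]
    have hdiff : g i t * Real.exp ((r + I) * J) * (t - s) ^ (2 * H - 2) -
        g i t * Real.exp ((ρ + I) * J) * (t - s) ^ (2 * H - 2) =
        g i t * (Real.exp ((r + I) * J) - Real.exp ((ρ + I) * J)) * (t - s) ^ (2 * H - 2) := by
      ring
    rw [hdiff, abs_mul, abs_mul, abs_of_nonneg (Real.rpow_nonneg hts _)]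
    have hfinal : |g i t| * |Real.exp ((r + I) * J) - Real.exp ((ρ + I) * J)| *
        (t - s) ^ (2 * H - 2) ≤ M * (E * (M * (t - s)) * |r - ρ|) * (t - s) ^ (2 * H - 2) := by
      apply mul_le_mul_of_nonneg_right _ (Real.rpow_nonneg hts _)
      exact mul_le_mul (hgabs i t) key (abs_nonneg _) hMpos.le
    refine hfinal.trans (le_of_eq ?_)
    rcases eq_or_lt_of_le hst with heq | hlt
    · rw [← heq, sub_self, Real.zero_rpow (by intro hcon; nlinarith),
        Real.zero_rpow (by intro hcon; nlinarith)]
      ring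
    · have h0 : t - s ≠ 0 := ne_of_gt (sub_pos.2 hlt)
      rw [show (2 * H - 1) = (2 * H - 2) + 1 by ring, Real.rpow_add_one h0]
      ring
  -- bound on the difference of inner integrals
  have hFbound : ∀ (i : Fin N) (r ρ : ℝ), 0 ≤ r → 0 ≤ ρ → ∀ t ∈ Set.Icc (0:ℝ) T,
      |(∫ s in (0:ℝ)..t, g i t * Real.exp ((r + I) * ∫ u in s..t, g i u) *
          (t - s) ^ (2 * H - 2)) -
        ∫ s in (0:ℝ)..t, g i t * Real.exp ((ρ + I) * ∫ u in s..t, g i u) *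
          (t - s) ^ (2 * H - 2)| ≤
      M ^ 2 * E * |r - ρ| / (2 * H) * t ^ (2 * H) := by
    intro i r ρ hr hρ t ht
    rw [← intervalIntegral.integral_sub (hfint i r t) (hfint i ρ t)]
    calc |∫ s in (0:ℝ)..t, (g i t * Real.exp ((r + I) * ∫ u in s..t, g i u) *
            (t - s) ^ (2 * H - 2) -
          g i t * Real.exp ((ρ + I) * ∫ u in s..t, g i u) * (t - s) ^ (2 * H - 2))|
        ≤ ∫ s in (0:ℝ)..t, |g i t * Real.exp ((r + I) * ∫ u in s..t, g i u) *
            (t - s) ^ (2 * H - 2) -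
          g i t * Real.exp ((ρ + I) * ∫ u in s..t, g i u) * (t - s) ^ (2 * H - 2)| :=
          intervalIntegral.abs_integral_le_integral_abs ht.1
      _ ≤ ∫ s in (0:ℝ)..t, M ^ 2 * E * |r - ρ| * (t - s) ^ (2 * H - 1) := by
          apply intervalIntegral.integral_mono_on ht.1
            ((hfint i r t).sub (hfint i ρ t)).abs
            ((hrpI t _ (by linarith)).const_mul _)
          exact fun s hs => hptw i r ρ hr hρ t s hs.1 hs.2 ht.2
      _ = M ^ 2 * E * |r - ρ| * ∫ s in (0:ℝ)..t, (t - s) ^ (2 * H - 1) :=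
          intervalIntegral.integral_const_mul _ _
      _ = M ^ 2 * E * |r - ρ| * (t ^ ((2 * H - 1) + 1) / ((2 * H - 1) + 1)) := by
          rw [my_integral_rpow_sub t _ (by linarith)]
      _ = M ^ 2 * E * |r - ρ| / (2 * H) * t ^ (2 * H) := by
          rw [show (2 * H - 1) + 1 = 2 * H by ring]; ring
  -- bound on the difference of the double integrals
  have hAi : ∀ (i : Fin N) (r ρ : ℝ), 0 ≤ r → 0 ≤ ρ →
      |(∫ t in (0:ℝ)..T, ∫ s in (0:ℝ)..t, g i t *
          Real.exp ((r + I) * ∫ u in s..t, g i u) * (t - s) ^ (2 * H - 2)) -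
        ∫ t in (0:ℝ)..T, ∫ s in (0:ℝ)..t, g i t *
          Real.exp ((ρ + I) * ∫ u in s..t, g i u) * (t - s) ^ (2 * H - 2)| ≤
      M ^ 2 * E * (T ^ (2 * H) * T / (2 * H * (2 * H + 1))) * |r - ρ| := by
    intro i r ρ hr hρ
    rw [← intervalIntegral.integral_sub (houter i r hr) (houter i ρ hρ)]
    have hcontT : Continuous fun t : ℝ => M ^ 2 * E * |r - ρ| / (2 * H) * t ^ (2 * H) :=
      continuous_const.mul (Real.continuous_rpow_const (by linarith))
    calc |∫ t in (0:ℝ)..T, ((∫ s in (0:ℝ)..t, g i t *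
            Real.exp ((r + I) * ∫ u in s..t, g i u) * (t - s) ^ (2 * H - 2)) -
          ∫ s in (0:ℝ)..t, g i t *
            Real.exp ((ρ + I) * ∫ u in s..t, g i u) * (t - s) ^ (2 * H - 2))|
        ≤ ∫ t in (0:ℝ)..T, |(∫ s in (0:ℝ)..t, g i t *
            Real.exp ((r + I) * ∫ u in s..t, g i u) * (t - s) ^ (2 * H - 2)) -
          ∫ s in (0:ℝ)..t, g i t *
            Real.exp ((ρ + I) * ∫ u in s..t, g i u) * (t - s) ^ (2 * H - 2)| :=
          intervalIntegral.abs_integral_le_integral_abs hT.le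
      _ ≤ ∫ t in (0:ℝ)..T, M ^ 2 * E * |r - ρ| / (2 * H) * t ^ (2 * H) := by
          apply intervalIntegral.integral_mono_on hT.le
            ((houter i r hr).sub (houter i ρ hρ)).abs
            (hcontT.intervalIntegrable 0 T)
          exact fun t ht => hFbound i r ρ hr hρ t ht
      _ = M ^ 2 * E * |r - ρ| / (2 * H) * ∫ t in (0:ℝ)..T, t ^ (2 * H) :=
          intervalIntegral.integral_const_mul _ _
      _ = M ^ 2 * E * |r - ρ| / (2 * H) * (T ^ (2 * H + 1) / (2 * H + 1)) := by
          rw [integral_rpow (Or.inl (by linarith))]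
          rw [Real.zero_rpow (by linarith), sub_zero]
      _ = M ^ 2 * E * (T ^ (2 * H) * T / (2 * H * (2 * H + 1))) * |r - ρ| := by
          rw [Real.rpow_add_one hT.ne' (2 * H)]
          field_simp
  -- nonnegativity
  have hKnn : (0:ℝ) ≤ αH * σ ^ 2 / (N * T * D) := by positivity
  have hpos : ∀ r : ℝ, 0 ≤ Φ r := by
    intro r
    rw [hΦ r]
    have hsum : (∑ i, ∫ t in (0:ℝ)..T, ∫ s in (0:ℝ)..t,
        g i t * Real.exp ((r + I) * ∫ u in s..t, g i u) * (t - s) ^ (2 * H - 2)) ≤ 0 := by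
      apply Finset.sum_nonpos
      intro i _
      apply my_integral_nonpos hT.le
      intro t ht
      apply my_integral_nonpos ht.1
      intro s hs
      have h1 : g i t * Real.exp ((r + I) * ∫ u in s..t, g i u) ≤ 0 :=
        mul_nonpos_iff.2 (Or.inr ⟨(hg i t).2, (Real.exp_pos _).le⟩)
      exact mul_nonpos_iff.2 (Or.inr ⟨h1, Real.rpow_nonneg (sub_nonneg.2 hs.2) _⟩)
    nlinarith [mul_nonneg hKnn (neg_nonneg.2 hsum)]
  -- the Lipschitz estimate
  have hLip : ∀ r ρ : ℝ, 0 ≤ r → 0 ≤ ρ → |Φ r - Φ ρ| ≤ c * |r - ρ| := by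
    intro r ρ hr hρ
    have hΦdiff : Φ r - Φ ρ = -(αH * σ ^ 2 / (N * T * D)) *
        ∑ i, ((∫ t in (0:ℝ)..T, ∫ s in (0:ℝ)..t, g i t *
            Real.exp ((r + I) * ∫ u in s..t, g i u) * (t - s) ^ (2 * H - 2)) -
          ∫ t in (0:ℝ)..T, ∫ s in (0:ℝ)..t, g i t *
            Real.exp ((ρ + I) * ∫ u in s..t, g i u) * (t - s) ^ (2 * H - 2)) := by
      rw [hΦ r, hΦ ρ, ← mul_sub, ← Finset.sum_sub_distrib]
    rw [hΦdiff, abs_mul, abs_neg, abs_of_nonneg hKnn]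
    have hsum : |∑ i, ((∫ t in (0:ℝ)..T, ∫ s in (0:ℝ)..t, g i t *
            Real.exp ((r + I) * ∫ u in s..t, g i u) * (t - s) ^ (2 * H - 2)) -
          ∫ t in (0:ℝ)..T, ∫ s in (0:ℝ)..t, g i t *
            Real.exp ((ρ + I) * ∫ u in s..t, g i u) * (t - s) ^ (2 * H - 2))| ≤
        (N : ℝ) * (M ^ 2 * E * (T ^ (2 * H) * T / (2 * H * (2 * H + 1))) * |r - ρ|) := by
      refine (Finset.abs_sum_le_sum_abs _ _).trans ?_
      calc (∑ i, |(∫ t in (0:ℝ)..T, ∫ s in (0:ℝ)..t, g i t *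
              Real.exp ((r + I) * ∫ u in s..t, g i u) * (t - s) ^ (2 * H - 2)) -
            ∫ t in (0:ℝ)..T, ∫ s in (0:ℝ)..t, g i t *
              Real.exp ((ρ + I) * ∫ u in s..t, g i u) * (t - s) ^ (2 * H - 2)|)
          ≤ ∑ _i : Fin N, M ^ 2 * E * (T ^ (2 * H) * T / (2 * H * (2 * H + 1))) * |r - ρ| :=
            Finset.sum_le_sum fun i _ => hAi i r ρ hr hρ
        _ = (N : ℝ) * (M ^ 2 * E * (T ^ (2 * H) * T / (2 * H * (2 * H + 1))) * |r - ρ|) := by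
            rw [Finset.sum_const, Finset.card_univ, Fintype.card_fin, nsmul_eq_mul]
    have hKey : αH * σ ^ 2 / (N * T * D) *
        ((N : ℝ) * (M ^ 2 * E * (T ^ (2 * H) * T / (2 * H * (2 * H + 1))))) ≤ c := by
      have hP : 0 < ᾱH * σ ^ 2 * M ^ 2 := by positivity
      have h1 : T ^ (2 * H) * E * (ᾱH * σ ^ 2 * M ^ 2) ≤ c * D :=
        (div_le_div_iff₀ hD hP).1 hcond
      have h2 : αH * σ ^ 2 / (N * T * D) *
          ((N : ℝ) * (M ^ 2 * E * (T ^ (2 * H) * T / (2 * H * (2 * H + 1))))) =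
          T ^ (2 * H) * E * (ᾱH * σ ^ 2 * M ^ 2) / D := by
        rw [hᾱ]
        field_simp
      rw [h2]
      exact (div_le_iff₀ hD).2 h1
    calc αH * σ ^ 2 / (N * T * D) * |∑ i, ((∫ t in (0:ℝ)..T, ∫ s in (0:ℝ)..t, g i t *
            Real.exp ((r + I) * ∫ u in s..t, g i u) * (t - s) ^ (2 * H - 2)) -
          ∫ t in (0:ℝ)..T, ∫ s in (0:ℝ)..t, g i t *
            Real.exp ((ρ + I) * ∫ u in s..t, g i u) * (t - s) ^ (2 * H - 2))|
        ≤ αH * σ ^ 2 / (N * T * D) *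
          ((N : ℝ) * (M ^ 2 * E * (T ^ (2 * H) * T / (2 * H * (2 * H + 1))) * |r - ρ|)) :=
          mul_le_mul_of_nonneg_left hsum hKnn
      _ = (αH * σ ^ 2 / (N * T * D) *
          ((N : ℝ) * (M ^ 2 * E * (T ^ (2 * H) * T / (2 * H * (2 * H + 1)))))) * |r - ρ| := by
          ring
      _ ≤ c * |r - ρ| := mul_le_mul_of_nonneg_right hKey (abs_nonneg _)
  refine ⟨fun r _ => hpos r, hLip, ?_⟩
  -- fixed point
  set K' : NNReal := ⟨c, hc.le⟩ with hK'
  have hK'lt : K' < 1 := by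
    have : (K' : ℝ) < 1 := hc1
    exact_mod_cast this
  have hmaps : Set.MapsTo Φ (Set.Ici (0:ℝ)) (Set.Ici 0) := fun x _ => hpos x
  have hcontr : ContractingWith K' (Set.MapsTo.restrict Φ _ _ hmaps) := by
    refine ⟨hK'lt, ?_⟩
    apply LipschitzWith.of_dist_le_mul
    rintro ⟨x, hx⟩ ⟨y, hy⟩
    rw [Subtype.dist_eq, Subtype.dist_eq]
    have h1 : (Set.MapsTo.restrict Φ _ _ hmaps ⟨x, hx⟩ : ℝ) = Φ x := rfl
    have h2 : (Set.MapsTo.restrict Φ _ _ hmaps ⟨y, hy⟩ : ℝ) = Φ y := rfl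
    rw [h1, h2, Real.dist_eq, Real.dist_eq]
    exact hLip x y hx hy
  obtain ⟨R, hRmem, hRfix, -, -⟩ := ContractingWith.exists_fixedPoint'
    (isClosed_Ici.isComplete) hmaps hcontr (Set.self_mem_Ici) (edist_ne_top _ _)
  refine ⟨R, ⟨hRmem, hRfix⟩, ?_⟩
  rintro z ⟨hz0, hzfix⟩
  have hz := hLip z R hz0 hRmem
  rw [hzfix, show Φ R = R from hRfix] at hz
  by_contra hne
  have habsp : 0 < |z - R| := abs_pos.2 (sub_ne_zero.2 hne)
  nlinarith
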